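/- Let (X,⪯) be a finite poset, U its lattice of upsets, φ_x ≥ 0 weights, and σ(A) = ∑_{x∈Min(A)}φ_x assumed increasing with respect to inclusion. If U_0 ∈ U is an upset with a unique minimal element x_0, then the Möbius-inversion weight of σ at U_0 equals σ(U_0) − σ(U_0 ∖ {x_0}) ≥ 0. -/
import Mathlib


open Finset
open scoped Classical

theorem weight_of_unique_minimal {X : Type*} [Fintype X] [PartialOrder X]
    (φ : X → ℝ) (hφ0 : ∀ x, 0 ≤ φ x)
    (σ : Finset X → ℝ)
    (hσ : ∀ A : Finset X,
      σ A = ∑ x ∈ A.filter (fun x => ∀ y ∈ A, y ≤ x → y = x), φ x)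
    (hmono : ∀ A B : Finset X, IsUpperSet (A : Set X) → IsUpperSet (B : Set X) →
      A ⊆ B → σ A ≤ σ B)
    (μ : Finset X → Finset X → ℝ)
    (hμ1 : ∀ A : Finset X, IsUpperSet (A : Set X) → μ A A = 1)
    (hμ2 : ∀ A B : Finset X, IsUpperSet (A : Set X) → IsUpperSet (B : Set X) →
      B ⊂ A → μ A B = -∑ A' ∈ Finset.univ.powerset.filter
          (fun A' : Finset X => IsUpperSet (A' : Set X) ∧ B ⊂ A' ∧ A' ⊆ A), μ A A')
    (U₀ : Finset X) (hU₀ : IsUpperSet (U₀ : Set X)) (x₀ : X)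
    (hx₀ : U₀.filter (fun x => ∀ y ∈ U₀, y ≤ x → y = x) = {x₀}) :
    ∑ U' ∈ Finset.univ.powerset.filter
        (fun U' : Finset X => IsUpperSet (U' : Set X) ∧ U' ⊆ U₀),
      μ U₀ U' * σ U' = σ U₀ - σ (U₀.erase x₀) ∧
    0 ≤ σ U₀ - σ (U₀.erase x₀) := by
  classical
  have hx₀U : x₀ ∈ U₀ := by
    have h := Finset.mem_singleton_self x₀
    rw [← hx₀] at h
    exact (Finset.mem_filter.mp h).1
  -- every element of U₀ is ≥ x₀
  have hwf : WellFoundedLT X := Finite.to_wellFoundedLT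
  have hle : ∀ y ∈ U₀, x₀ ≤ y := by
    intro y
    induction y using WellFoundedLT.induction with
    | ind y IH =>
      intro hy
      by_cases h : ∀ z ∈ U₀, z ≤ y → z = y
      · have hmem : y ∈ U₀.filter (fun x => ∀ y ∈ U₀, y ≤ x → y = x) :=
          Finset.mem_filter.mpr ⟨hy, h⟩
        rw [hx₀, Finset.mem_singleton] at hmem
        exact hmem ▸ le_refl _
      · push_neg at h
        obtain ⟨z, hz, hzy, hne⟩ := h
        exact (IH z (lt_of_le_of_ne hzy hne) hz).trans hzy
  set V := U₀.erase x₀ with hV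
  have hVU : V ⊆ U₀ := Finset.erase_subset _ _
  have hVupset : IsUpperSet (V : Set X) := by
    intro a b hab ha
    rw [Finset.mem_coe, hV, Finset.mem_erase] at ha ⊢
    refine ⟨?_, hU₀ hab ha.2⟩
    rintro rfl
    exact ha.1 (le_antisymm hab (hle a ha.2))
  have hx₀V : x₀ ∉ V := Finset.notMem_erase _ _
  have hVlt : V ⊂ U₀ := Finset.ssubset_iff_of_subset hVU |>.mpr ⟨x₀, hx₀U, hx₀V⟩
  -- any upset ⊆ U₀ containing x₀ equals U₀
  have hfull : ∀ B : Finset X, IsUpperSet (B : Set X) → B ⊆ U₀ → x₀ ∈ B → B = U₀ := by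
    intro B hBu hBU hxB
    apply Finset.Subset.antisymm hBU
    intro y hy
    exact hBu (hle y hy) hxB
  have hsubV : ∀ B : Finset X, B ⊆ U₀ → x₀ ∉ B → B ⊆ V := by
    intro B hBU hxB y hy
    exact Finset.mem_erase.mpr ⟨fun h => hxB (h ▸ hy), hBU hy⟩
  have hUV : U₀ ≠ V := fun h => hx₀V (h ▸ hx₀U)
  -- μ U₀ V = -1
  have hμV : μ U₀ V = -1 := by
    rw [hμ2 U₀ V hU₀ hVupset hVlt]
    have hset : Finset.univ.powerset.filter
        (fun A' : Finset X => IsUpperSet (A' : Set X) ∧ V ⊂ A' ∧ A' ⊆ U₀) = {U₀} := by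
      ext A'
      simp only [Finset.mem_filter, Finset.mem_powerset, Finset.mem_singleton,
        Finset.subset_univ, true_and]
      constructor
      · rintro ⟨hAu, hVA, hAU⟩
        by_cases hx : x₀ ∈ A'
        · exact hfull A' hAu hAU hx
        · exact absurd (hsubV A' hAU hx) hVA.not_subset
      · rintro rfl
        exact ⟨hU₀, hVlt, Finset.Subset.refl _⟩
    rw [hset, Finset.sum_singleton, hμ1 U₀ hU₀]
  -- μ U₀ B = 0 for upsets B ⊊ V
  have hzero : ∀ n : ℕ, ∀ B : Finset X, IsUpperSet (B : Set X) → B ⊂ V →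
      U₀.card - B.card ≤ n → μ U₀ B = 0 := by
    intro n
    induction n with
    | zero =>
      intro B _ hBV hcard
      have : B.card < U₀.card := Finset.card_lt_card (hBV.trans_subset hVU)
      omega
    | succ n IH =>
      intro B hBu hBV hcard
      have hBU : B ⊂ U₀ := hBV.trans_subset hVU
      rw [hμ2 U₀ B hU₀ hBu hBU]
      set s := Finset.univ.powerset.filter
        (fun A' : Finset X => IsUpperSet (A' : Set X) ∧ B ⊂ A' ∧ A' ⊆ U₀) with hs
      have hpair : ({U₀, V} : Finset (Finset X)) ⊆ s := by
        intro A hA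
        rw [Finset.mem_insert, Finset.mem_singleton] at hA
        rcases hA with rfl | rfl
        · simp only [hs, Finset.mem_filter, Finset.mem_powerset, Finset.subset_univ, true_and]
          exact ⟨hU₀, hBU, Finset.Subset.refl _⟩
        · simp only [hs, Finset.mem_filter, Finset.mem_powerset, Finset.subset_univ, true_and]
          exact ⟨hVupset, hBV, hVU⟩
      have hsum : ∑ A' ∈ s, μ U₀ A' = ∑ A' ∈ ({U₀, V} : Finset (Finset X)), μ U₀ A' := by
        refine (Finset.sum_subset hpair ?_).symm
        intro A' hA' hA'n
        rw [Finset.mem_insert, Finset.mem_singleton] at hA'n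
        push_neg at hA'n
        simp only [hs, Finset.mem_filter, Finset.mem_powerset] at hA'
        obtain ⟨-, hAu, hBA, hAU⟩ := hA'
        have hxA : x₀ ∉ A' := fun hx => hA'n.1 (hfull A' hAu hAU hx)
        have hAV : A' ⊂ V := lt_of_le_of_ne (hsubV A' hAU hxA) hA'n.2
        have hcA : B.card < A'.card := Finset.card_lt_card hBA
        have hcV : A'.card < U₀.card := Finset.card_lt_card (hAV.trans_subset hVU)
        exact IH A' hAu hAV (by omega)
      rw [hsum, Finset.sum_pair hUV, hμ1 U₀ hU₀, hμV]
      ring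
  -- main computation
  set t := Finset.univ.powerset.filter
    (fun U' : Finset X => IsUpperSet (U' : Set X) ∧ U' ⊆ U₀) with ht
  have hpair : ({U₀, V} : Finset (Finset X)) ⊆ t := by
    intro A hA
    rw [Finset.mem_insert, Finset.mem_singleton] at hA
    rcases hA with rfl | rfl
    · simp only [ht, Finset.mem_filter, Finset.mem_powerset, Finset.subset_univ, true_and]
      exact ⟨hU₀, Finset.Subset.refl _⟩
    · simp only [ht, Finset.mem_filter, Finset.mem_powerset, Finset.subset_univ, true_and]
      exact ⟨hVupset, hVU⟩
  have hmain : ∑ U' ∈ t, μ U₀ U' * σ U' = σ U₀ - σ V := by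
    have hsum : ∑ U' ∈ t, μ U₀ U' * σ U'
        = ∑ U' ∈ ({U₀, V} : Finset (Finset X)), μ U₀ U' * σ U' := by
      refine (Finset.sum_subset hpair ?_).symm
      intro A' hA' hA'n
      rw [Finset.mem_insert, Finset.mem_singleton] at hA'n
      push_neg at hA'n
      simp only [ht, Finset.mem_filter, Finset.mem_powerset] at hA'
      obtain ⟨-, hAu, hAU⟩ := hA'
      have hxA : x₀ ∉ A' := fun hx => hA'n.1 (hfull A' hAu hAU hx)
      have hAV : A' ⊂ V := lt_of_le_of_ne (hsubV A' hAU hxA) hA'n.2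
      rw [hzero U₀.card A' hAu hAV (Nat.sub_le _ _), zero_mul]
    rw [hsum, Finset.sum_pair hUV, hμ1 U₀ hU₀, hμV]
    ring
  exact ⟨hmain, sub_nonneg.mpr (hmono V U₀ hVupset hU₀ hVU)⟩
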